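/- arXiv:1210.1651 — 4 statements merged into one kernel-verified Lean document; each statement's English description precedes it below -/
import Mathlib

section
/- Let F₁ ⊆ F₂ be a field extension with both F₁ and F₂ algebraically closed, and let p₁,…,p_s ∈ F₁[X₁,…,Xₙ]. If the common zero set V of p₁,…,p_s in F₁ⁿ is irreducible (i.e., V is nonempty and V is not the union of two zero sets of families of polynomials over F₂ each of which is a proper subset of V — equivalently, V is an irreducible closed set in the Zariski topology), then the common zero set of p₁,…,p_s in F₂ⁿ is irreducible as well. -/
open MvPolynomial

/-- The common zero set in `Fⁿ` of a family of polynomials over `F`. -/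
def zeroSet {n : ℕ} (F : Type) [CommRing F] (S : Set (MvPolynomial (Fin n) F)) :
    Set (Fin n → F) :=
  {x | ∀ p ∈ S, MvPolynomial.eval x p = 0}

/-- A variety `V ⊆ Fⁿ` is irreducible if it is nonempty and is not the union of two
zero sets of polynomial families, each of which is a proper subset of `V`. -/
def IsIrreducibleVariety {n : ℕ} (F : Type) [CommRing F] (V : Set (Fin n → F)) : Prop :=
  V.Nonempty ∧
    ¬ ∃ S₁ S₂ : Set (MvPolynomial (Fin n) F),
      zeroSet F S₁ ⊂ V ∧ zeroSet F S₂ ⊂ V ∧ V = zeroSet F S₁ ∪ zeroSet F S₂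

section Aux

variable {n r : ℕ} {F₁ F₂ : Type} [Field F₁] [Field F₂] [Algebra F₁ F₂]

lemma eval_map_comp (x : Fin n → F₁) (q : MvPolynomial (Fin n) F₁) :
    eval (fun i => algebraMap F₁ F₂ (x i)) (MvPolynomial.map (algebraMap F₁ F₂) q)
      = algebraMap F₁ F₂ (eval x q) := by
  rw [eval_map]
  have := MvPolynomial.eval₂_comp_left (algebraMap F₁ F₂) (RingHom.id F₁) x q
  simpa [Function.comp_def] using this.symm

lemma exists_decomp (f : MvPolynomial (Fin n) F₂) (M : Submodule F₁ F₂)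
    (hM : ∀ m, coeff m f ∈ M) (b : Module.Basis (Fin r) F₁ M) :
    ∃ fd : Fin r → MvPolynomial (Fin n) F₁,
      f = ∑ i, C (b i : F₂) * MvPolynomial.map (algebraMap F₁ F₂) (fd i) := by
  refine ⟨fun i => ∑ m ∈ f.support, monomial m (b.repr ⟨coeff m f, hM m⟩ i), ?_⟩
  simp only [map_sum, map_monomial, Finset.mul_sum, C_mul_monomial]
  rw [Finset.sum_comm]
  conv_lhs => rw [f.as_sum]
  refine Finset.sum_congr rfl fun m _ => ?_
  rw [← map_sum (monomial m)]
  congr 1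
  have := b.sum_repr ⟨coeff m f, hM m⟩
  calc coeff m f = ((⟨coeff m f, hM m⟩ : M) : F₂) := rfl
    _ = ((∑ i, b.repr ⟨coeff m f, hM m⟩ i • b i : M) : F₂) := by rw [this]
    _ = ∑ i, (b i : F₂) * algebraMap F₁ F₂ (b.repr ⟨coeff m f, hM m⟩ i) := by
        push_cast
        refine Finset.sum_congr rfl fun i _ => ?_
        rw [Algebra.smul_def, mul_comm]

/-- `zeroSet` of a set of polynomials equals the `zeroLocus` of the ideal it spans. -/
lemma zeroSet_eq_zeroLocus (S : Set (MvPolynomial (Fin n) F₁)) :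
    zeroSet F₁ S = MvPolynomial.zeroLocus F₁ (Ideal.span S) := by
  ext x
  constructor
  · intro hx q hq
    have : S ⊆ (RingHom.ker (eval x) : Ideal (MvPolynomial (Fin n) F₁)) := fun p hp => hx p hp
    exact (Ideal.span_le.mpr this) hq
  · intro hx q hq
    exact hx q (Ideal.subset_span hq)

end Aux

/-- **Irreducibility is preserved under extensions of algebraically closed fields.**
If `F₁ ⊆ F₂` are algebraically closed fields and the common zero set of
`p₁, …, p_s ∈ F₁[X₁,…,Xₙ]` in `F₁ⁿ` is irreducible, then so is their common zero set
in `F₂ⁿ`. -/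
theorem irreducible_variety_extension (n s : ℕ) (F₁ F₂ : Type)
    [Field F₁] [Field F₂] [IsAlgClosed F₁] [IsAlgClosed F₂] [Algebra F₁ F₂]
    (p : Fin s → MvPolynomial (Fin n) F₁)
    (h : IsIrreducibleVariety F₁ (zeroSet F₁ (Set.range p))) :
    IsIrreducibleVariety F₂
      (zeroSet F₂ (Set.range fun i => MvPolynomial.map (algebraMap F₁ F₂) (p i))) := by
  set ϕ := algebraMap F₁ F₂ with hϕ
  set V₁ := zeroSet F₁ (Set.range p) with hV₁
  set V₂ := zeroSet F₂ (Set.range fun i => MvPolynomial.map ϕ (p i)) with hV₂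
  -- F₁-points of V₁ give points of V₂
  have hpt : ∀ x ∈ V₁, (fun i => ϕ (x i)) ∈ V₂ := by
    rintro x hx q ⟨i, rfl⟩
    rw [eval_map_comp, hx (p i) ⟨i, rfl⟩, map_zero]
  -- Vanishing transfer: elements of the radical of span (range p) vanish on V₂
  have hrad : ∀ q ∈ (Ideal.span (Set.range p)).radical, ∀ y ∈ V₂,
      eval y (MvPolynomial.map ϕ q) = 0 := by
    intro q hq y hy
    obtain ⟨m, hm⟩ := hq
    have hker : Ideal.span (Set.range p) ≤ RingHom.ker ((eval y).comp (MvPolynomial.map ϕ)) := by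
      rw [Ideal.span_le]
      rintro _ ⟨i, rfl⟩
      exact hy _ ⟨i, rfl⟩
    have h0 : eval y (MvPolynomial.map ϕ (q ^ m)) = 0 := hker hm
    rw [map_pow, map_pow] at h0
    exact pow_eq_zero_iff'.mp h0 |>.1
  -- Core: if a product vanishes on V₂, one factor does
  have core : ∀ f g : MvPolynomial (Fin n) F₂,
      (∀ y ∈ V₂, eval y f * eval y g = 0) →
      (∀ y ∈ V₂, eval y f = 0) ∨ (∀ y ∈ V₂, eval y g = 0) := by
    intro f g hfg
    classical
    set T : Finset F₂ := f.support.image (fun m => coeff m f) ∪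
      g.support.image (fun m => coeff m g) with hT
    set M : Submodule F₁ F₂ := Submodule.span F₁ (T : Set F₂) with hMdef
    have hMf : ∀ m, coeff m f ∈ M := by
      intro m
      by_cases hm : coeff m f = 0
      · rw [hm]; exact M.zero_mem
      · exact Submodule.subset_span (by
          simp only [hT, Finset.coe_union, Set.mem_union, Finset.coe_image, Set.mem_image]
          exact Or.inl ⟨m, by simpa using hm, rfl⟩)
    have hMg : ∀ m, coeff m g ∈ M := by
      intro m
      by_cases hm : coeff m g = 0
      · rw [hm]; exact M.zero_mem
      · exact Submodule.subset_span (by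
          simp only [hT, Finset.coe_union, Set.mem_union, Finset.coe_image, Set.mem_image]
          exact Or.inr ⟨m, by simpa using hm, rfl⟩)
    have : FiniteDimensional F₁ M := FiniteDimensional.span_finset F₁ T
    set b : Module.Basis (Fin (Module.finrank F₁ M)) F₁ M := Module.finBasis F₁ M with hb
    obtain ⟨fd, hfd⟩ := exists_decomp f M hMf b
    obtain ⟨gd, hgd⟩ := exists_decomp g M hMg b
    -- linear independence of the basis vectors in F₂
    have hli : LinearIndependent F₁ (fun i => (b i : F₂)) :=
      b.linearIndependent.map' M.subtype M.ker_subtype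
    -- evaluation formula at F₁-points
    have hevalf : ∀ (q : MvPolynomial (Fin n) F₂) (qd : Fin (Module.finrank F₁ M) →
        MvPolynomial (Fin n) F₁), q = ∑ i, C (b i : F₂) * MvPolynomial.map ϕ (qd i) →
        ∀ x : Fin n → F₁, eval (fun i => ϕ (x i)) q = ∑ i, eval x (qd i) • (b i : F₂) := by
      intro q qd hq x
      rw [hq, map_sum]
      refine Finset.sum_congr rfl fun i _ => ?_
      rw [eval_mul, eval_C, eval_map_comp, Algebra.smul_def, mul_comm]
    -- dichotomy on V₁
    have hdich : ∀ x ∈ V₁, (∀ i, eval x (fd i) = 0) ∨ (∀ i, eval x (gd i) = 0) := by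
      intro x hx
      have := hfg _ (hpt x hx)
      rcases mul_eq_zero.mp this with h0 | h0
      · left
        rw [hevalf f fd hfd x] at h0
        exact fun i => Fintype.linearIndependent_iff.mp hli _ h0 i
      · right
        rw [hevalf g gd hgd x] at h0
        exact fun i => Fintype.linearIndependent_iff.mp hli _ h0 i
    set Sf : Set (MvPolynomial (Fin n) F₁) := Set.range p ∪ Set.range fd with hSf
    set Sg : Set (MvPolynomial (Fin n) F₁) := Set.range p ∪ Set.range gd with hSg
    have hSfV : zeroSet F₁ Sf ⊆ V₁ := fun x hx q hq => hx q (Or.inl hq)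
    have hSgV : zeroSet F₁ Sg ⊆ V₁ := fun x hx q hq => hx q (Or.inl hq)
    have hunion : V₁ = zeroSet F₁ Sf ∪ zeroSet F₁ Sg := by
      apply Set.Subset.antisymm
      · intro x hx
        rcases hdich x hx with h0 | h0
        · exact Or.inl (fun q hq => hq.elim (fun hq => hx q hq) (fun ⟨i, hi⟩ => hi ▸ h0 i))
        · exact Or.inr (fun q hq => hq.elim (fun hq => hx q hq) (fun ⟨i, hi⟩ => hi ▸ h0 i))
      · exact Set.union_subset hSfV hSgV
    -- V₁ irreducible: one of the two equals V₁
    have hone : zeroSet F₁ Sf = V₁ ∨ zeroSet F₁ Sg = V₁ := by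
      by_contra hcon
      push_neg at hcon
      exact h.2 ⟨Sf, Sg, ⟨hSfV, fun hle => hcon.1 (Set.Subset.antisymm hSfV hle)⟩,
        ⟨hSgV, fun hle => hcon.2 (Set.Subset.antisymm hSgV hle)⟩, hunion⟩
    -- conclude using the Nullstellensatz over F₁
    have key : ∀ (qd : Fin (Module.finrank F₁ M) → MvPolynomial (Fin n) F₁),
        (∀ x ∈ V₁, ∀ i, eval x (qd i) = 0) →
        ∀ y ∈ V₂, ∀ i, eval y (MvPolynomial.map ϕ (qd i)) = 0 := by
      intro qd hv y hy i
      have hmem : qd i ∈ (Ideal.span (Set.range p)).radical := by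
        rw [← MvPolynomial.vanishingIdeal_zeroLocus_eq_radical (K := F₁), ← zeroSet_eq_zeroLocus]
        exact fun x hx => hv x hx i
      exact hrad _ hmem y hy
    rcases hone with h0 | h0
    · left
      intro y hy
      rw [hfd, map_sum]
      refine Finset.sum_eq_zero fun i _ => ?_
      rw [eval_mul, key fd (fun x hx i => (h0 ▸ hx : x ∈ zeroSet F₁ Sf) (fd i) (Or.inr ⟨i, rfl⟩)) y hy i, mul_zero]
    · right
      intro y hy
      rw [hgd, map_sum]
      refine Finset.sum_eq_zero fun i _ => ?_
      rw [eval_mul, key gd (fun x hx i => (h0 ▸ hx : x ∈ zeroSet F₁ Sg) (gd i) (Or.inr ⟨i, rfl⟩)) y hy i, mul_zero]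
  constructor
  · obtain ⟨x, hx⟩ := h.1
    exact ⟨fun i => ϕ (x i), hpt x hx⟩
  · rintro ⟨S₁, S₂, h₁, h₂, hU⟩
    obtain ⟨a, haV, haS⟩ := Set.exists_of_ssubset h₁
    obtain ⟨c, hcV, hcS⟩ := Set.exists_of_ssubset h₂
    simp only [zeroSet, Set.mem_setOf_eq, not_forall] at haS hcS
    obtain ⟨f, hfS, hfa⟩ := haS
    obtain ⟨g, hgS, hgc⟩ := hcS
    have hfg : ∀ y ∈ V₂, eval y f * eval y g = 0 := by
      intro y hy
      rcases hU ▸ hy with hy1 | hy1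
      · rw [hy1 f hfS, zero_mul]
      · rw [hy1 g hgS, mul_zero]
    rcases core f g hfg with h0 | h0
    · exact hfa (h0 a haV)
    · exact hgc (h0 c hcV)
end

section
/- Let R be a UFD with the p-property. If there exist primes p and q in R with |p| < 1 < |q|, then there are infinitely many pairwise non-associated primes of R with absolute value strictly less than 1, and infinitely many pairwise non-associated primes of R with absolute value strictly greater than 1. -/
/-- A UFD `R` together with an absolute value `|·|` has the *p-property* if every unit has
absolute value `1` and, whenever there are primes `p`, `q` with `|p| < 1 < |q|`, there is
another prime `r` not associated to `p` with `|r| < 1`. -/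
def IsUFDWithPProperty (R : Type) [CommRing R] [IsDomain R] [UniqueFactorizationMonoid R]
    (abv : AbsoluteValue R ℝ) : Prop :=
  (∀ u : R, IsUnit u → abv u = 1) ∧
    (∀ p q : R, Prime p → Prime q → abv p < 1 → 1 < abv q →
      ∃ r : R, Prime r ∧ ¬ Associated r p ∧ abv r < 1)


open Classical in
/-- Recursive chain of finsets used to build an infinite pairwise non-associated set. -/
private noncomputable def pchain {R : Type} [CommRing R] [DecidableEq R] (P : R → Prop)
    (h : ∀ F : Finset R, (∀ x ∈ F, P x) → ∃ r, P r ∧ ∀ x ∈ F, ¬ Associated r x) :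
    ℕ → {F : Finset R // ∀ x ∈ F, P x}
  | 0 => ⟨∅, by simp⟩
  | n + 1 =>
      ⟨insert (h (pchain P h n).1 (pchain P h n).2).choose (pchain P h n).1, by
        intro x hx
        rcases Finset.mem_insert.mp hx with hx | hx
        · exact hx ▸ (h (pchain P h n).1 (pchain P h n).2).choose_spec.1
        · exact (pchain P h n).2 x hx⟩

private lemma exists_infinite_nonassoc {R : Type} [CommRing R] [DecidableEq R] (P : R → Prop)
    (h : ∀ F : Finset R, (∀ x ∈ F, P x) → ∃ r, P r ∧ ∀ x ∈ F, ¬ Associated r x) :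
    ∃ S : Set R, S.Infinite ∧ (∀ x ∈ S, P x) ∧
      ∀ x ∈ S, ∀ y ∈ S, x ≠ y → ¬ Associated x y := by
  set f : ℕ → R := fun n => (h (pchain P h n).1 (pchain P h n).2).choose with hf
  have hfP : ∀ n, P (f n) := fun n => (h (pchain P h n).1 (pchain P h n).2).choose_spec.1
  have hmem : ∀ n, f n ∈ (pchain P h (n+1)).1 := fun n => Finset.mem_insert_self _ _
  have hsub : ∀ m n : ℕ, m ≤ n → (pchain P h m).1 ⊆ (pchain P h n).1 := by
    intro m n hmn
    induction hmn with
    | refl => exact fun x hx => hx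
    | step _ ih => exact ih.trans (Finset.subset_insert _ _)
  have hkey : ∀ m n : ℕ, m < n → ¬ Associated (f n) (f m) := by
    intro m n hmn
    exact (h (pchain P h n).1 (pchain P h n).2).choose_spec.2 (f m) (hsub (m+1) n hmn (hmem m))
  have hinj : Function.Injective f := by
    intro m n hfe
    by_contra hne
    rcases Nat.lt_or_ge m n with hlt | hge
    · exact hkey m n hlt (hfe ▸ Associated.refl (f n))
    · exact hkey n m (lt_of_le_of_ne hge (Ne.symm hne)) (hfe ▸ Associated.refl (f n))
  refine ⟨Set.range f, Set.infinite_range_of_injective hinj, ?_, ?_⟩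
  · rintro x ⟨n, rfl⟩; exact hfP n
  · rintro x ⟨m, rfl⟩ y ⟨n, rfl⟩ hne
    rcases Nat.lt_or_ge m n with hlt | hge
    · exact fun hassoc => hkey m n hlt hassoc.symm
    · exact hkey n m (lt_of_le_of_ne hge fun e => hne (congrArg f e).symm)

private lemma one_le_abv_of_primes {R : Type} [CommRing R] [IsDomain R]
    [UniqueFactorizationMonoid R] (abv : AbsoluteValue R ℝ)
    (hu : ∀ u : R, IsUnit u → abv u = 1) :
    ∀ x : R, x ≠ 0 → (∀ r : R, Prime r → r ∣ x → 1 ≤ abv r) → 1 ≤ abv x := by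
  intro x
  induction x using UniqueFactorizationMonoid.induction_on_prime with
  | h₁ => intro hx; exact absurd rfl hx
  | h₂ u hu' => intro _ _; rw [hu u hu']
  | h₃ a p ha hp ih =>
    intro _ hdvd
    have h1 : 1 ≤ abv p := hdvd p hp (Dvd.intro a rfl)
    have h2 : 1 ≤ abv a := ih ha (fun r hr hra => hdvd r hr (hra.mul_left p))
    rw [map_mul]; nlinarith [abv.nonneg a]

private lemma abv_le_one_of_primes {R : Type} [CommRing R] [IsDomain R]
    [UniqueFactorizationMonoid R] (abv : AbsoluteValue R ℝ)
    (hu : ∀ u : R, IsUnit u → abv u = 1) :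
    ∀ x : R, x ≠ 0 → (∀ r : R, Prime r → r ∣ x → abv r ≤ 1) → abv x ≤ 1 := by
  intro x
  induction x using UniqueFactorizationMonoid.induction_on_prime with
  | h₁ => intro hx; exact absurd rfl hx
  | h₂ u hu' => intro _ _; rw [hu u hu']
  | h₃ a p ha hp ih =>
    intro _ hdvd
    have h1 : abv p ≤ 1 := hdvd p hp (Dvd.intro a rfl)
    have h2 : abv a ≤ 1 := ih ha (fun r hr hra => hdvd r hr (hra.mul_left p))
    rw [map_mul]; nlinarith [abv.nonneg a, abv.nonneg p]

private lemma abv_eq_of_associated {R : Type} [CommRing R] [IsDomain R]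
    [UniqueFactorizationMonoid R] (abv : AbsoluteValue R ℝ)
    (hu : ∀ u : R, IsUnit u → abv u = 1) {a b : R} (h : Associated a b) :
    abv a = abv b := by
  obtain ⟨u, hu'⟩ := h
  rw [← hu', map_mul, hu u u.isUnit, mul_one]

open Classical in
/-- The small-prime extension step. -/
private lemma small_extension {R : Type} [CommRing R] [IsDomain R]
    [UniqueFactorizationMonoid R] (abv : AbsoluteValue R ℝ)
    (hR : IsUFDWithPProperty R abv)
    (p p' : R) (hp : Prime p) (hp' : Prime p') (hp1 : abv p < 1) (hp'1 : abv p' < 1)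
    (hpp' : ¬ Associated p' p)
    (F : Finset R) (hF : ∀ x ∈ F, Prime x ∧ abv x < 1) :
    ∃ r, (Prime r ∧ abv r < 1) ∧ ∀ x ∈ F, ¬ Associated r x := by
  obtain ⟨hu, _⟩ := hR
  set G : Finset R := F.filter (fun x => ¬ Associated x p) with hG
  set B : R := p' * ∏ x ∈ G, x with hB
  have hGprime : ∀ x ∈ G, Prime x := fun x hx => (hF x (Finset.mem_filter.mp hx).1).1
  have hBlt : abv B < 1 := by
    have hprod : abv (∏ x ∈ G, x) ≤ 1 := by
      rw [map_prod]
      exact Finset.prod_le_one (fun x _ => abv.nonneg x)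
        (fun x hx => le_of_lt (hF x (Finset.mem_filter.mp hx).1).2)
    calc abv B = abv p' * abv (∏ x ∈ G, x) := map_mul abv _ _
      _ ≤ abv p' * 1 := mul_le_of_le_one_right (abv.nonneg p') hprod |>.trans (by rw [mul_one])
      _ < 1 := by rw [mul_one]; exact hp'1
  -- choose exponents
  obtain ⟨a₀, ha₀⟩ := exists_pow_lt_of_lt_one (by norm_num : (0:ℝ) < 1/2) hp1
  obtain ⟨b₀, hb₀⟩ := exists_pow_lt_of_lt_one (by norm_num : (0:ℝ) < 1/2) hBlt
  set a := a₀ + 1 with ha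
  set b := b₀ + 1 with hb
  have hpa : abv p ^ a < 1/2 :=
    lt_of_le_of_lt (pow_le_pow_of_le_one (abv.nonneg p) (le_of_lt hp1) (Nat.le_succ a₀)) ha₀
  have hBb : abv B ^ b < 1/2 :=
    lt_of_le_of_lt (pow_le_pow_of_le_one (abv.nonneg B) (le_of_lt hBlt) (Nat.le_succ b₀)) hb₀
  set x : R := p ^ a + B ^ b with hx
  have hxlt : abv x < 1 := by
    calc abv x ≤ abv (p ^ a) + abv (B ^ b) := abv.add_le _ _
      _ = abv p ^ a + abv B ^ b := by rw [map_pow, map_pow]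
      _ < 1/2 + 1/2 := add_lt_add hpa hBb
      _ = 1 := by norm_num
  have hp'B : p' ∣ B := Dvd.intro _ rfl
  have hxne : x ≠ 0 := by
    intro h0
    have hpa' : p' ∣ p ^ a := by
      have : p ^ a = -(B ^ b) := by linear_combination h0
      rw [this]
      exact (hp'B.trans (dvd_pow_self B (Nat.succ_ne_zero b₀))).neg_right
    exact hpp' (hp'.associated_of_dvd hp (hp'.dvd_of_dvd_pow hpa'))
  -- x has a small prime divisor
  have : ∃ r : R, Prime r ∧ r ∣ x ∧ abv r < 1 := by
    by_contra hcon
    push_neg at hcon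
    have := one_le_abv_of_primes abv hu x hxne (fun r hr hrx => hcon r hr hrx)
    linarith
  obtain ⟨r, hr, hrx, hrlt⟩ := this
  refine ⟨r, ⟨hr, hrlt⟩, ?_⟩
  intro y hyF hassoc
  have hy := hF y hyF
  have hyx : y ∣ x := hassoc.symm.dvd.trans hrx
  by_cases hyp : Associated y p
  · -- y divides p^a, hence y divides B^b, then y divides B, contradiction
    have hypa : y ∣ p ^ a := hyp.dvd.trans (dvd_pow_self p (Nat.succ_ne_zero a₀))
    have hyBb : y ∣ B ^ b := by
      have : B ^ b = x - p ^ a := by rw [hx]; ring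
      rw [this]; exact dvd_sub hyx hypa
    have hyB : y ∣ B := hy.1.dvd_of_dvd_pow hyBb
    rcases hy.1.dvd_mul.mp hyB with hyp' | hyG
    · exact hpp' ((hy.1.associated_of_dvd hp' hyp').symm.trans hyp)
    · obtain ⟨z, hzG, hyz⟩ := hy.1.exists_mem_finset_dvd hyG
      have hz := (Finset.mem_filter.mp hzG)
      exact hz.2 ((hy.1.associated_of_dvd (hGprime z hzG) hyz).symm.trans hyp)
  · -- y ∈ G divides B^b, hence divides p^a, contradiction
    have hyG : y ∈ G := Finset.mem_filter.mpr ⟨hyF, hyp⟩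
    have hyB : y ∣ B := (Finset.dvd_prod_of_mem id hyG).mul_left p'
    have hypa : y ∣ p ^ a := by
      have : p ^ a = x - B ^ b := by rw [hx]; ring
      rw [this]
      exact dvd_sub hyx (hyB.trans (dvd_pow_self B (Nat.succ_ne_zero b₀)))
    exact hyp (hy.1.associated_of_dvd hp (hy.1.dvd_of_dvd_pow hypa))

open Classical in
/-- The large-prime extension step. -/
private lemma large_extension {R : Type} [CommRing R] [IsDomain R]
    [UniqueFactorizationMonoid R] (abv : AbsoluteValue R ℝ)
    (hR : IsUFDWithPProperty R abv)
    (p q : R) (hp : Prime p) (hq : Prime q) (hp1 : abv p < 1) (hq1 : 1 < abv q)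
    (F : Finset R) (hF : ∀ x ∈ F, Prime x ∧ 1 < abv x) :
    ∃ r, (Prime r ∧ 1 < abv r) ∧ ∀ x ∈ F, ¬ Associated r x := by
  obtain ⟨hu, _⟩ := hR
  set A : R := q * ∏ x ∈ F, x with hA
  have hA1 : 1 < abv A := by
    have hprod : 1 ≤ abv (∏ x ∈ F, x) := by
      rw [map_prod]
      exact Finset.prod_induction _ (fun t => 1 ≤ t)
        (fun a b ha hb => by nlinarith) le_rfl
        (fun x hx => le_of_lt (hF x hx).2)
    calc (1:ℝ) < abv q * 1 := by rw [mul_one]; exact hq1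
      _ ≤ abv q * abv (∏ x ∈ F, x) :=
        mul_le_mul_of_nonneg_left hprod (le_of_lt (lt_trans one_pos hq1))
      _ = abv A := (map_mul abv _ _).symm
  obtain ⟨m₀, hm₀⟩ := pow_unbounded_of_one_lt (2:ℝ) hA1
  set m := m₀ + 1 with hm
  have hAm : 2 < abv A ^ m :=
    lt_of_lt_of_le hm₀ (pow_le_pow_right₀ (le_of_lt hA1) (Nat.le_succ m₀))
  set x : R := A ^ m + p with hx
  have hxgt : 1 < abv x := by
    have h1 : abv (A ^ m) ≤ abv x + abv p := by
      have : A ^ m = x - p := by rw [hx]; ring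
      rw [this]
      calc abv (x - p) ≤ abv x + abv (-p) := by
            have := abv.add_le x (-p); rw [← sub_eq_add_neg] at this; exact this
        _ = abv x + abv p := by rw [abv.map_neg]
    rw [map_pow] at h1
    linarith
  have hxne : x ≠ 0 := by
    intro h0; rw [h0, map_zero] at hxgt; linarith
  have : ∃ r : R, Prime r ∧ r ∣ x ∧ 1 < abv r := by
    by_contra hcon
    push_neg at hcon
    have := abv_le_one_of_primes abv hu x hxne (fun r hr hrx => hcon r hr hrx)
    linarith
  obtain ⟨r, hr, hrx, hrgt⟩ := this
  refine ⟨r, ⟨hr, hrgt⟩, ?_⟩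
  intro y hyF hassoc
  have hy := hF y hyF
  have hyx : y ∣ x := hassoc.symm.dvd.trans hrx
  have hyA : y ∣ A := (Finset.dvd_prod_of_mem id hyF).mul_left q
  have hyp : y ∣ p := by
    have : p = x - A ^ m := by rw [hx]; ring
    rw [this]
    exact dvd_sub hyx (hyA.trans (dvd_pow_self A (Nat.succ_ne_zero m₀)))
  have := abv_eq_of_associated abv hu (hy.1.associated_of_dvd hp hyp)
  linarith [hy.2]

/-- **Infinitely many small and large primes in a UFD with the p-property.**
If `R` is a UFD with the p-property containing primes `p`, `q` with `|p| < 1 < |q|`, then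
there are infinitely many pairwise non-associated primes of absolute value `< 1` and
infinitely many pairwise non-associated primes of absolute value `> 1`. -/
theorem infinitely_many_small_and_large_primes (R : Type) [CommRing R] [IsDomain R]
    [UniqueFactorizationMonoid R] (abv : AbsoluteValue R ℝ)
    (hR : IsUFDWithPProperty R abv)
    (p q : R) (hp : Prime p) (hq : Prime q) (hp1 : abv p < 1) (hq1 : 1 < abv q) :
    (∃ S : Set R, S.Infinite ∧ (∀ x ∈ S, Prime x ∧ abv x < 1) ∧
      ∀ x ∈ S, ∀ y ∈ S, x ≠ y → ¬ Associated x y) ∧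
    (∃ T : Set R, T.Infinite ∧ (∀ x ∈ T, Prime x ∧ 1 < abv x) ∧
      ∀ x ∈ T, ∀ y ∈ T, x ≠ y → ¬ Associated x y) := by
  classical
  obtain ⟨p', hp'prime, hp'passoc, hp'lt⟩ := hR.2 p q hp hq hp1 hq1
  constructor
  · exact exists_infinite_nonassoc (fun x => Prime x ∧ abv x < 1)
      (fun F hF => small_extension abv hR p p' hp hp'prime hp1 hp'lt hp'passoc F hF)
  · exact exists_infinite_nonassoc (fun x => Prime x ∧ 1 < abv x)
      (fun F hF => large_extension abv hR p q hp hq hp1 hq1 F hF)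
end

section
/- Let R be an integral domain, h : R → [0,∞) a function, and U the hyperfilter on ℕ (a nonprincipal ultrafilter). Extend h to the ultrapower ring Germ U R by acting componentwise, so that for x ∈ Germ U R, h(x) ∈ Germ U ℝ. Then h is a height function on R if and only if the set R_fin = { x ∈ Germ U R : h(x) ≤ n for some n ∈ ℕ } is a subring of Germ U R (equivalently, is closed under addition and multiplication). -/
open Filter

/-- **Nonstandard characterization of height functions.**
Let `R` be an integral domain, `h : R → [0,∞)`, and `U` the hyperfilter on `ℕ`.  Extend `h`
componentwise to the ultrapower `Germ U R`.  Then `h` is a height function on `R` (i.e. of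
`θ`-type for some `θ : ℕ → ℕ`) iff the set
`R_fin = {x : Germ U R | h(x) ≤ n for some n ∈ ℕ}` is closed under addition and
multiplication (equivalently, a subring). -/
theorem height_function_iff_finite_part_subring (R : Type) [CommRing R] [IsDomain R]
    (h : R → ℝ) (h0 : ∀ x : R, 0 ≤ h x) :
    (∃ θ : ℕ → ℕ, ∀ (x y : R) (n : ℕ), h x ≤ n → h y ≤ n →
        h (x + y) ≤ θ n ∧ h (x * y) ≤ θ n) ↔
      ∀ x y : Germ (Filter.hyperfilter ℕ : Filter ℕ) R,
        (∃ n : ℕ, x.map h ≤ (Germ.const (n : ℝ))) →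
        (∃ n : ℕ, y.map h ≤ (Germ.const (n : ℝ))) →
        (∃ n : ℕ, (x + y).map h ≤ (Germ.const (n : ℝ))) ∧
          (∃ n : ℕ, (x * y).map h ≤ (Germ.const (n : ℝ))) := by
  constructor
  · rintro ⟨θ, hθ⟩ x y hx hy
    induction x using Germ.inductionOn with | h f =>
    induction y using Germ.inductionOn with | h g =>
    obtain ⟨n, hn⟩ := hx
    obtain ⟨m, hm⟩ := hy
    rw [Germ.map_coe, Germ.const, Germ.coe_le] at hn hm
    set N := max n m with hN
    have hfN : ∀ᶠ i in (hyperfilter ℕ : Filter ℕ), h (f i) ≤ (N : ℝ) :=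
      hn.mono fun i hi => hi.trans (Nat.cast_le.2 (le_max_left n m))
    have hgN : ∀ᶠ i in (hyperfilter ℕ : Filter ℕ), h (g i) ≤ (N : ℝ) :=
      hm.mono fun i hi => hi.trans (Nat.cast_le.2 (le_max_right n m))
    have key : ∀ᶠ i in (hyperfilter ℕ : Filter ℕ),
        h (f i + g i) ≤ (θ N : ℝ) ∧ h (f i * g i) ≤ (θ N : ℝ) :=
      (hfN.and hgN).mono fun i hi => hθ (f i) (g i) N hi.1 hi.2
    constructor
    · refine ⟨θ N, ?_⟩
      rw [← Germ.coe_add, Germ.map_coe, Germ.const, Germ.coe_le]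
      exact key.mono fun i hi => hi.1
    · refine ⟨θ N, ?_⟩
      rw [← Germ.coe_mul, Germ.map_coe, Germ.const, Germ.coe_le]
      exact key.mono fun i hi => hi.2
  · intro H
    by_contra hc
    have key : ∃ n : ℕ, ∀ m : ℕ, ∃ x y : R, h x ≤ n ∧ h y ≤ n ∧
        ((m : ℝ) < h (x + y) ∨ (m : ℝ) < h (x * y)) := by
      by_contra hk
      push_neg at hk
      choose θ hθ using hk
      exact hc ⟨θ, fun x y n hx hy => by
        obtain ⟨h1, h2⟩ := hθ n x y hx hy
        exact ⟨h1, h2⟩⟩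
    obtain ⟨n, hn⟩ := key
    choose f g hf hg hfg using hn
    have hx : ∃ k : ℕ, (↑f : Germ (hyperfilter ℕ : Filter ℕ) R).map h ≤ Germ.const (k : ℝ) := by
      refine ⟨n, ?_⟩
      rw [Germ.map_coe, Germ.const, Germ.coe_le]
      exact Eventually.of_forall hf
    have hy : ∃ k : ℕ, (↑g : Germ (hyperfilter ℕ : Filter ℕ) R).map h ≤ Germ.const (k : ℝ) := by
      refine ⟨n, ?_⟩
      rw [Germ.map_coe, Germ.const, Germ.coe_le]
      exact Eventually.of_forall hg
    obtain ⟨⟨N, hNs⟩, ⟨M, hMp⟩⟩ := H (↑f) (↑g) hx hy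
    rw [← Germ.coe_add, Germ.map_coe, Germ.const, Germ.coe_le] at hNs
    rw [← Germ.coe_mul, Germ.map_coe, Germ.const, Germ.coe_le] at hMp
    set K := max N M with hK
    have hbad : ∀ᶠ i in (hyperfilter ℕ : Filter ℕ), i ≤ K := by
      filter_upwards [hNs, hMp] with i h1 h2
      by_contra hi
      push_neg at hi
      have hK1 : (N : ℝ) < (i : ℝ) := Nat.cast_lt.2 (lt_of_le_of_lt (le_max_left N M) hi)
      have hK2 : (M : ℝ) < (i : ℝ) := Nat.cast_lt.2 (lt_of_le_of_lt (le_max_right N M) hi)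
      rcases hfg i with hlt | hlt
      · exact absurd h1 (not_le.2 (hK1.trans hlt))
      · exact absurd h2 (not_le.2 (hK2.trans hlt))
    exact Set.Finite.notMem_hyperfilter (Set.finite_Iic K) hbad
end

section
/- There exist a natural number A and two sequences (a_n) and (b_n) of positive integers such that d(a_n) ≤ A and d(b_n) ≤ A for all n, but d(a_n + b_n) → ∞ as n → ∞, where d(m) denotes the number of divisors of m. -/
open Filter

lemma exists_primes_sum_dvd (n : ℕ) :
    ∃ p r : ℕ, p.Prime ∧ r.Prime ∧ 2 ^ (n + 1) ∣ p + r := by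
  haveI : NeZero (2 ^ (n + 1)) := ⟨by positivity⟩
  obtain ⟨p, -, hp, hp1⟩ :=
    Nat.forall_exists_prime_gt_and_eq_mod (a := (1 : ZMod (2 ^ (n + 1)))) isUnit_one 0
  obtain ⟨r, -, hr, hr1⟩ :=
    Nat.forall_exists_prime_gt_and_eq_mod (a := (-1 : ZMod (2 ^ (n + 1)))) isUnit_one.neg 0
  refine ⟨p, r, hp, hr, ?_⟩
  have : ((p + r : ℕ) : ZMod (2 ^ (n + 1))) = 0 := by push_cast [hp1, hr1]; ring
  exact (ZMod.natCast_eq_zero_iff _ _).mp this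

/-- There are a natural number `A` and sequences `(a_n)`, `(b_n)` of positive integers
with `d(a_n) ≤ A` and `d(b_n) ≤ A` for all `n`, while `d(a_n + b_n) → ∞`,
where `d(m)` is the number of (positive) divisors of `m`. -/
theorem divisor_function_not_height : ∃ (A : ℕ) (a b : ℕ → ℕ),
    (∀ n, 0 < a n) ∧ (∀ n, 0 < b n) ∧
    (∀ n, (Nat.divisors (a n)).card ≤ A) ∧ (∀ n, (Nat.divisors (b n)).card ≤ A) ∧
    Tendsto (fun n => (Nat.divisors (a n + b n)).card) atTop atTop := by
  choose p r hp hr hdvd using exists_primes_sum_dvd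
  refine ⟨2, p, r, fun n => (hp n).pos, fun n => (hr n).pos, ?_, ?_, ?_⟩
  · intro n; rw [(hp n).divisors]; exact Finset.card_le_two
  · intro n; rw [(hr n).divisors]; exact Finset.card_le_two
  · apply tendsto_atTop_mono (f := fun n => n)
    · intro n
      have hne : p n + r n ≠ 0 := (Nat.add_pos_left (hp n).pos _).ne'
      have hsub := Nat.divisors_subset_of_dvd hne (hdvd n)
      have hcard := Finset.card_le_card hsub
      have : (Nat.divisors (2 ^ (n + 1))).card = n + 2 := by
        rw [Nat.divisors_prime_pow Nat.prime_two]
        simp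
      omega
    · exact tendsto_id
end
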